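/- Viète's formula holds: the infinite product ∏_{k=1}^{∞} (a_k / 2) converges to 2/π. -/

import Mathlib

open Real Filter Topology

lemma viete_aux_eq (a : ℕ → ℝ)
    (ha1 : a 1 = Real.sqrt 2)
    (ha : ∀ k ≥ 1, a (k + 1) = Real.sqrt (2 + a k)) :
    ∀ k, 1 ≤ k → a k = Real.sqrtTwoAddSeries 0 k := by
  intro k hk
  induction k with
  | zero => omega
  | succ n ih =>
    rcases Nat.eq_or_lt_of_le hk with h | h
    · have hn0 : n = 0 := by omega
      subst hn0
      rw [Real.sqrtTwoAddSeries_one]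
      exact ha1
    · have hn : 1 ≤ n := by omega
      rw [ha n hn, ih hn, Real.sqrtTwoAddSeries]

lemma viete_sin_pos (K : ℕ) : 0 < Real.sin (π / 2 ^ (K + 1)) := by
  apply Real.sin_pos_of_pos_of_lt_pi
  · positivity
  · have h1 : (1 : ℝ) < 2 ^ (K + 1) := by
      exact_mod_cast Nat.one_lt_two_pow (by omega)
    calc π / 2 ^ (K + 1) < π / 1 := by
          apply div_lt_div_of_pos_left Real.pi_pos (by norm_num) h1
      _ = π := by ring

lemma viete_prod_eq (K : ℕ) :
    ∏ k ∈ Finset.Icc 1 K, Real.cos (π / 2 ^ (k + 1)) =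
      1 / (2 ^ K * Real.sin (π / 2 ^ (K + 1))) := by
  induction K with
  | zero => simp
  | succ n ih =>
    rw [Finset.prod_Icc_succ_top (by omega), ih]
    have hsin : Real.sin (π / 2 ^ (n + 1)) =
        2 * Real.sin (π / 2 ^ (n + 2)) * Real.cos (π / 2 ^ (n + 2)) := by
      have h2 : π / 2 ^ (n + 1) = 2 * (π / 2 ^ (n + 2)) := by
        rw [pow_succ]; ring
      rw [h2, Real.sin_two_mul]
    have h1 := viete_sin_pos (n + 1)
    have h2 := viete_sin_pos n
    have hcos : Real.cos (π / 2 ^ (n + 2)) ≠ 0 := by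
      intro h0
      rw [hsin, h0] at h2
      simp at h2
    show 1 / (2 ^ n * Real.sin (π / 2 ^ (n + 1))) * Real.cos (π / 2 ^ (n + 2)) =
      1 / (2 ^ (n + 1) * Real.sin (π / 2 ^ (n + 2)))
    set s := Real.sin (π / 2 ^ (n + 2)) with hs
    set c := Real.cos (π / 2 ^ (n + 2)) with hc
    rw [hsin, pow_succ,
      div_mul_eq_mul_div, one_mul,
      show (2:ℝ) ^ n * (2 * s * c) = c * (2 ^ n * 2 * s) by ring,
      div_mul_eq_div_div, div_self hcos]

theorem viete_product_formula (a : ℕ → ℝ)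
    (ha1 : a 1 = Real.sqrt 2)
    (ha : ∀ k ≥ 1, a (k + 1) = Real.sqrt (2 + a k)) :
    Tendsto (fun K : ℕ => ∏ k ∈ Finset.Icc 1 K, a k / 2) atTop (𝓝 (2 / π)) := by
  have heq : ∀ K : ℕ, ∏ k ∈ Finset.Icc 1 K, a k / 2 =
      1 / (2 ^ K * Real.sin (π / 2 ^ (K + 1))) := by
    intro K
    rw [← viete_prod_eq]
    apply Finset.prod_congr rfl
    intro k hk
    simp only [Finset.mem_Icc] at hk
    rw [viete_aux_eq a ha1 ha k hk.1, Real.cos_pi_over_two_pow]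
  simp only [heq]
  -- limit computation
  set θ : ℕ → ℝ := fun K => π / 2 ^ (K + 1) with hθ
  have hθ0 : Tendsto θ atTop (𝓝[≠] 0) := by
    apply tendsto_nhdsWithin_of_tendsto_nhds_of_eventually_within
    · have : Tendsto (fun K : ℕ => ((1:ℝ)/2) ^ (K+1)) atTop (𝓝 0) := by
        exact (tendsto_pow_atTop_nhds_zero_of_lt_one (by norm_num) (by norm_num)).comp
          (tendsto_add_atTop_nat 1)
      have := this.const_mul π
      simpa [hθ, div_eq_mul_inv, mul_pow, mul_comm, mul_assoc] using this
    · filter_upwards with K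
      have : 0 < θ K := by positivity
      exact ne_of_gt this
  have hslope : Tendsto (fun x : ℝ => Real.sin x / x) (𝓝[≠] 0) (𝓝 1) := by
    have h := (Real.hasDerivAt_sin 0)
    rw [hasDerivAt_iff_tendsto_slope] at h
    simp only [Real.cos_zero] at h
    refine h.congr' ?_
    filter_upwards [self_mem_nhdsWithin] with x hx
    simp [slope_def_field, div_eq_mul_inv, mul_comm]
  have hmain : Tendsto (fun K : ℕ => 2 ^ K * Real.sin (θ K)) atTop (𝓝 (π / 2)) := by
    have h1 : Tendsto (fun K : ℕ => Real.sin (θ K) / θ K) atTop (𝓝 1) :=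
      hslope.comp hθ0
    have h2 : ∀ K : ℕ, 2 ^ K * Real.sin (θ K) = (Real.sin (θ K) / θ K) * (π / 2) := by
      intro K
      have hθpos : (0:ℝ) < θ K := by positivity
      have : (2:ℝ) ^ K * θ K = π / 2 := by
        simp only [hθ]
        rw [pow_succ]
        field_simp
      rw [← this]
      field_simp
    simp only [h2]
    simpa using h1.mul_const (π / 2)
  have := hmain.inv₀ (by positivity : (π/2 : ℝ) ≠ 0)
  simp only [one_div]
  convert this using 2
  rw [inv_div]
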